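/- An LFSA S with |Q| states is K-step opaque with respect to Q_S if and only if it is min{K, 2^{|Q|} − 2}-step opaque with respect to Q_S. In particular, K-step opacity for any K > 2^{|Q|} − 2 is equivalent to (2^{|Q|} − 2)-step opacity. -/
import Mathlib


/-- A labeled finite-state automaton (LFSA): transition relation `δ`,
initial states `Q0`, labeling `lab` (where `none` stands for ε, i.e. unobservable). -/
structure LFSA (Q : Type*) (E : Type*) (A : Type*) where
  δ : Q → E → Q → Prop
  Q0 : Set Q
  lab : E → Option A

namespace LFSA

variable {Q Q1 Q2 E A : Type*}

/-- A run `q →s q'` over a finite event sequence. -/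
inductive Run (S : LFSA Q E A) : Q → List E → Q → Prop
  | nil (q : Q) : Run S q [] q
  | cons {q q' q'' : Q} {e : E} {s : List E} :
      S.δ q e q' → Run S q' s q'' → Run S q (e :: s) q''

/-- Output (label sequence) of an event sequence. -/
def out (S : LFSA Q E A) (s : List E) : List A := s.filterMap S.lab

/-- Generated finite language. -/
def L (S : LFSA Q E A) : Set (List E) := {s | ∃ q0 ∈ S.Q0, ∃ q, S.Run q0 s q}

/-- Current-state estimate after observing `σ`. -/
def M (S : LFSA Q E A) (σ : List A) : Set Q :=
  {q | ∃ q0 ∈ S.Q0, ∃ s : List E, S.out s = σ ∧ S.Run q0 s q}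

/-- Reachability via a nonempty event sequence. -/
def ReachPlus (S : LFSA Q E A) (q q' : Q) : Prop := ∃ s : List E, s ≠ [] ∧ S.Run q s q'

/-- There is a transition cycle reachable from `q` (a cycle at `q` itself counts). -/
def CycleReachableFrom (S : LFSA Q E A) (q : Q) : Prop :=
  ∃ p : Q, (p = q ∨ S.ReachPlus q p) ∧ ∃ s : List E, s ≠ [] ∧ S.Run p s p

/-- `*`-strong detectability. -/
def StarSD (S : LFSA Q E A) : Prop :=
  ∃ k : ℕ, 0 < k ∧ ∀ s ∈ S.L, ∀ σ : List A, σ <+: S.out s → k < σ.length →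
    ∃ q : Q, S.M σ = {q}

/-- ω-strong detectability. -/
def OmegaSD (S : LFSA Q E A) : Prop :=
  ∃ k : ℕ, 0 < k ∧ ∀ (s : ℕ → E) (ρ : ℕ → Q), ρ 0 ∈ S.Q0 →
    (∀ n : ℕ, S.δ (ρ n) (s n) (ρ (n + 1))) →
    ∀ (n : ℕ) (σ : List A), σ <+: S.out (List.ofFn (fun i : Fin n => s i)) →
      k < σ.length → ∃ q : Q, S.M σ = {q}

/-- Concurrent composition: observable transitions with equal labels synchronize,
unobservable transitions interleave. Events are pairs over `Option E` (`none` = ε). -/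
def CC (S1 : LFSA Q1 E A) (S2 : LFSA Q2 E A) :
    LFSA (Q1 × Q2) (Option E × Option E) A where
  δ p ev p' :=
    match ev with
    | (some e, some e') =>
        (∃ a : A, S1.lab e = some a ∧ S2.lab e' = some a) ∧
          S1.δ p.1 e p'.1 ∧ S2.δ p.2 e' p'.2
    | (some e, none) => S1.lab e = none ∧ S1.δ p.1 e p'.1 ∧ p.2 = p'.2
    | (none, some e') => S2.lab e' = none ∧ p.1 = p'.1 ∧ S2.δ p.2 e' p'.2
    | (none, none) => False
  Q0 := {p | p.1 ∈ S1.Q0 ∧ p.2 ∈ S2.Q0}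
  lab ev := ev.1.bind S1.lab

/-- Left projection of an event sequence of a concurrent composition. -/
def lproj (s : List (Option E × Option E)) : List E := s.filterMap Prod.fst

/-- Right projection of an event sequence of a concurrent composition. -/
def rproj (s : List (Option E × Option E)) : List E := s.filterMap Prod.snd

/-- Unobservable reach of a set of states. -/
def UR (S : LFSA Q E A) (X : Set Q) : Set Q :=
  {q | ∃ q0 ∈ X, ∃ s : List E, S.out s = [] ∧ S.Run q0 s q}

/-- One step of the observer (powerset construction). -/
def obsStep (S : LFSA Q E A) (x : Set Q) (a : A) : Set Q :=
  {q' | ∃ q ∈ x, ∃ (e : E) (p : Q), S.lab e = some a ∧ S.δ q e p ∧ q' ∈ S.UR {p}}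

/-- Observer run (deterministic). -/
def obsRun (S : LFSA Q E A) (x : Set Q) (σ : List A) : Set Q := σ.foldl S.obsStep x

/-- The concurrent composition `CC(S_ε, Obs^ε)` of `S` (with events relabeled by their
labels) and a deterministic observer with step function `ostep` and initial state `x0`:
observable transitions move both components, unobservable ones move only the left one. -/
def CCObs (S : LFSA Q E A) (ostep : Set Q → A → Set Q) (x0 : Set Q) :
    LFSA (Q × Set Q) E A where
  δ p e p' := S.δ p.1 e p'.1 ∧
    (∀ a : A, S.lab e = some a → p'.2 = ostep p.2 a) ∧
    (S.lab e = none → p'.2 = p.2)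
  Q0 := {p | p.1 ∈ S.Q0 ∧ p.2 = x0}
  lab := S.lab

/-- A state is reachable if it is an initial state or reachable from one. -/
def Reachable (S : LFSA Q E A) (q : Q) : Prop := ∃ q0 ∈ S.Q0, ∃ s : List E, S.Run q0 s q

/-- Restriction of an automaton to a set of allowed states. -/
def restrict (S : LFSA Q E A) (P : Set Q) : LFSA Q E A where
  δ q e q' := S.δ q e q' ∧ q ∈ P ∧ q' ∈ P
  Q0 := S.Q0 ∩ P
  lab := S.lab

/-- A run all of whose states (including endpoints) lie in `P`. -/
inductive RunIn (S : LFSA Q E A) (P : Set Q) : Q → List E → Q → Prop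
  | nil (q : Q) : q ∈ P → RunIn S P q [] q
  | cons {q q' q'' : Q} {e : E} {s : List E} :
      q ∈ P → S.δ q e q' → RunIn S P q' s q'' → RunIn S P q (e :: s) q''

/-- Normal subautomaton: all faulty transitions removed. -/
def Sn (S : LFSA Q E A) (Ef : Set E) : LFSA Q E A where
  δ q e q' := S.δ q e q' ∧ e ∉ Ef
  Q0 := S.Q0
  lab := S.lab

/-- Faulty subautomaton: faulty transitions together with all their
predecessor and successor transitions. -/
def Sf (S : LFSA Q E A) (Ef : Set E) : LFSA Q E A where
  δ q e q' := S.δ q e q' ∧ ∃ c f d, f ∈ Ef ∧ S.δ c f d ∧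
      ((q = c ∧ e = f ∧ q' = d) ∨ (c = q' ∨ S.ReachPlus q' c) ∨ (q = d ∨ S.ReachPlus d q))
  Q0 := S.Q0
  lab := S.lab

/-- `s` ends with a faulty event. -/
def EndsFaulty (Ef : Set E) (s : List E) : Prop := ∃ (t : List E) (e : E), e ∈ Ef ∧ s = t ++ [e]

/-- `E_f`-diagnosability. -/
def Diag (S : LFSA Q E A) (Ef : Set E) : Prop :=
  ∃ k : ℕ, ∀ s ∈ S.L, EndsFaulty Ef s → ∀ s' : List E, s ++ s' ∈ S.L → k < s'.length →
    ∀ s'' ∈ S.L, S.out s'' = S.out (s ++ s') → ∃ e ∈ Ef, e ∈ s''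

/-- `E_f`-predictability. -/
def Pred (S : LFSA Q E A) (Ef : Set E) : Prop :=
  ∃ k : ℕ, ∀ s ∈ S.L, EndsFaulty Ef s →
    ∃ s' : List E, s' <+: s ∧ (∀ e ∈ s', e ∉ Ef) ∧
      ∀ u v : List E, u ++ v ∈ S.L → S.out s' = S.out u → (∀ e ∈ u, e ∉ Ef) →
        k < v.length → ∃ e ∈ Ef, e ∈ v

/-- Current-state opacity. -/
def CSO (S : LFSA Q E A) (QS : Set Q) : Prop :=
  ∀ q0 ∈ S.Q0, ∀ (s : List E) (q : Q), S.Run q0 s q → q ∈ QS →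
    ∃ q0' ∈ S.Q0, ∃ (s' : List E) (q' : Q), S.Run q0' s' q' ∧ q' ∉ QS ∧ S.out s = S.out s'

/-- Initial-state opacity. -/
def ISO (S : LFSA Q E A) (QS : Set Q) : Prop :=
  ∀ q0 ∈ S.Q0 ∩ QS, ∀ (s : List E) (q : Q), S.Run q0 s q →
    ∃ q0' ∈ S.Q0 \ QS, ∃ (s' : List E) (q' : Q), S.Run q0' s' q' ∧ S.out s = S.out s'

/-- Infinite-step opacity. -/
def InfSO (S : LFSA Q E A) (QS : Set Q) : Prop :=
  ∀ q0 ∈ S.Q0, ∀ (s1 : List E) (q1 : Q) (s2 : List E) (q2 : Q),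
    S.Run q0 s1 q1 → S.Run q1 s2 q2 → q1 ∈ QS →
    ∃ q0' ∈ S.Q0, ∃ (s1' : List E) (q1' : Q) (s2' : List E) (q2' : Q),
      S.Run q0' s1' q1' ∧ S.Run q1' s2' q2' ∧ q1' ∉ QS ∧
        S.out s1 = S.out s1' ∧ S.out s2 = S.out s2'

/-- `K`-step opacity. -/
def KSO (S : LFSA Q E A) (QS : Set Q) (K : ℕ) : Prop :=
  ∀ q0 ∈ S.Q0, ∀ (s1 : List E) (q1 : Q) (s2 : List E) (q2 : Q),
    S.Run q0 s1 q1 → S.Run q1 s2 q2 → q1 ∈ QS → (S.out s2).length ≤ K →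
    ∃ q0' ∈ S.Q0, ∃ (s1' : List E) (q1' : Q) (s2' : List E) (q2' : Q),
      S.Run q0' s1' q1' ∧ S.Run q1' s2' q2' ∧ q1' ∉ QS ∧
        S.out s1 = S.out s1' ∧ S.out s2 = S.out s2'

/-- Strong current-state opacity: the matching run is entirely non-secret. -/
def SCSO (S : LFSA Q E A) (QS : Set Q) : Prop :=
  ∀ q0 ∈ S.Q0, ∀ (s : List E) (q : Q), S.Run q0 s q → q ∈ QS →
    ∃ q0' ∈ S.Q0, ∃ (s' : List E) (q' : Q), S.RunIn QSᶜ q0' s' q' ∧ S.out s = S.out s'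

/-- Strong initial-state opacity. -/
def SISO (S : LFSA Q E A) (QS : Set Q) : Prop :=
  ∀ q0 ∈ S.Q0 ∩ QS, ∀ (s : List E) (q : Q), S.Run q0 s q →
    ∃ q0' ∈ S.Q0 \ QS, ∃ (s' : List E) (q' : Q), S.RunIn QSᶜ q0' s' q' ∧ S.out s = S.out s'

/-- Strong infinite-step opacity. -/
def SInfSO (S : LFSA Q E A) (QS : Set Q) : Prop :=
  ∀ q0 ∈ S.Q0, ∀ (s1 : List E) (q1 : Q) (s2 : List E) (q2 : Q),
    S.Run q0 s1 q1 → S.Run q1 s2 q2 → q1 ∈ QS →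
    ∃ q0' ∈ S.Q0, ∃ (s1' : List E) (q1' : Q) (s2' : List E) (q2' : Q),
      S.RunIn QSᶜ q0' s1' q1' ∧ S.RunIn QSᶜ q1' s2' q2' ∧
        S.out s1 = S.out s1' ∧ S.out s2 = S.out s2'

/-- Strong `K`-step opacity. -/
def SKSO (S : LFSA Q E A) (QS : Set Q) (K : ℕ) : Prop :=
  ∀ q0 ∈ S.Q0, ∀ (s1 : List E) (q1 : Q) (s2 : List E) (q2 : Q),
    S.Run q0 s1 q1 → S.Run q1 s2 q2 → q1 ∈ QS → (S.out s2).length ≤ K →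
    ∃ q0' ∈ S.Q0, ∃ (s1' : List E) (q1' : Q) (s2' : List E) (q2' : Q),
      S.RunIn QSᶜ q0' s1' q1' ∧ S.RunIn QSᶜ q1' s2' q2' ∧
        S.out s1 = S.out s1' ∧ S.out s2 = S.out s2'

/-- Observer step of the secret-deleted subautomaton `S_dss`. -/
def dssObsStep (S : LFSA Q E A) (QS : Set Q) : Set Q → A → Set Q :=
  (S.restrict QSᶜ).obsStep

/-- Initial observer state of the secret-deleted subautomaton. -/
def dssInit (S : LFSA Q E A) (QS : Set Q) : Set Q :=
  (S.restrict QSᶜ).UR (S.restrict QSᶜ).Q0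

end LFSA


namespace LFSA

section Aux

variable {Q E A : Type*}

lemma run_append' {S : LFSA Q E A} {q p r : Q} {u v : List E}
    (h1 : S.Run q u p) (h2 : S.Run p v r) : S.Run q (u ++ v) r := by
  induction h1 with
  | nil => simpa using h2
  | cons hd _ ih => exact Run.cons hd (ih h2)

lemma run_split' {S : LFSA Q E A} : ∀ (u : List E) {q r : Q} {v : List E},
    S.Run q (u ++ v) r → ∃ p, S.Run q u p ∧ S.Run p v r := by
  intro u
  induction u with
  | nil =>
    intro q r v h
    exact ⟨q, Run.nil q, h⟩
  | cons e u ih =>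
    intro q r v h
    cases h with
    | cons hd tl =>
      obtain ⟨p, h1, h2⟩ := ih tl
      exact ⟨p, Run.cons hd h1, h2⟩

lemma out_eq_append' {S : LFSA Q E A} : ∀ {s : List E} {α β : List A},
    S.out s = α ++ β → ∃ u v, s = u ++ v ∧ S.out u = α ∧ S.out v = β := by
  intro s
  induction s with
  | nil =>
    intro α β h
    rcases List.append_eq_nil_iff.mp h.symm with ⟨rfl, rfl⟩
    exact ⟨[], [], rfl, rfl, rfl⟩
  | cons e s ih =>
    intro α β h
    rcases he : S.lab e with _ | a
    · rw [out, List.filterMap_cons_none he] at h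
      obtain ⟨u, v, rfl, hu, hv⟩ := ih h
      exact ⟨e :: u, v, rfl, by rw [out, List.filterMap_cons_none he]; exact hu, hv⟩
    · rw [out, List.filterMap_cons_some he] at h
      cases α with
      | nil =>
        exact ⟨[], e :: s, rfl, rfl, by
          rw [out, List.filterMap_cons_some he]; exact h⟩
      | cons a' α' =>
        rw [List.cons_append] at h
        obtain ⟨ha, h2⟩ := List.cons_eq_cons.mp h
        obtain ⟨u, v, rfl, hu, hv⟩ := ih h2
        refine ⟨e :: u, v, rfl, ?_, hv⟩
        rw [out, List.filterMap_cons_some he]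
        exact List.cons_eq_cons.mpr ⟨ha, hu⟩

lemma out_append' {S : LFSA Q E A} (u v : List E) :
    S.out (u ++ v) = S.out u ++ S.out v := by
  simp [out, List.filterMap_append]

/-- `q` can produce observation `σ`. -/
def CanP (S : LFSA Q E A) (q : Q) (σ : List A) : Prop :=
  ∃ s q', S.out s = σ ∧ S.Run q s q'

lemma canP_append {S : LFSA Q E A} {q : Q} {α β : List A} :
    S.CanP q (α ++ β) ↔ ∃ p, (∃ s, S.out s = α ∧ S.Run q s p) ∧ S.CanP p β := by
  constructor
  · rintro ⟨s, q', hout, hrun⟩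
    obtain ⟨u, v, rfl, hu, hv⟩ := out_eq_append' hout
    obtain ⟨p, h1, h2⟩ := run_split' u hrun
    exact ⟨p, ⟨u, hu, h1⟩, v, q', hv, h2⟩
  · rintro ⟨p, ⟨s, hs, hr⟩, t, q', ht, hr2⟩
    exact ⟨s ++ t, q', by rw [out_append', hs, ht], run_append' hr hr2⟩


lemma canP_shorten {S : LFSA Q E A} [Fintype Q] {σ : List A} {q1 : Q}
    (hq1 : S.CanP q1 σ) (hlen : 2 ^ Fintype.card Q - 2 < σ.length) :
    ∃ σ' : List A, σ'.length < σ.length ∧ ∀ q, (S.CanP q σ ↔ S.CanP q σ') := by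
  classical
  have hcard : Fintype.card {X : Set Q // X.Nonempty} = 2 ^ Fintype.card Q - 1 := by
    have e : {X : Set Q // X.Nonempty} ≃ {X : Set Q // ¬ X = ∅} :=
      Equiv.subtypeEquivRight (by simp [Set.nonempty_iff_ne_empty])
    rw [Fintype.card_congr e, Fintype.card_subtype_compl,
      Fintype.card_subtype_eq (∅ : Set Q), Fintype.card_set]
  have hne : ∀ i : ℕ, {q | S.CanP q (σ.drop i)}.Nonempty := by
    intro i
    have hq1' := hq1
    rw [← List.take_append_drop i σ] at hq1'
    obtain ⟨p, _, hp⟩ := canP_append.mp hq1'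
    exact ⟨p, hp⟩
  set f : Fin (σ.length + 1) → {X : Set Q // X.Nonempty} :=
    fun i => ⟨{q | S.CanP q (σ.drop (i : ℕ))}, hne i⟩ with hf
  have hlt : Fintype.card {X : Set Q // X.Nonempty} < Fintype.card (Fin (σ.length + 1)) := by
    rw [hcard, Fintype.card_fin]
    have h1 : 1 ≤ 2 ^ Fintype.card Q := Nat.one_le_two_pow
    omega
  obtain ⟨i, j, hij, hfij⟩ := Fintype.exists_ne_map_eq_of_card_lt f hlt
  -- core construction given i < j with equal suffix-sets
  have key : ∀ i j : Fin (σ.length + 1), (i : ℕ) < (j : ℕ) → f i = f j →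
      ∃ σ' : List A, σ'.length < σ.length ∧ ∀ q, (S.CanP q σ ↔ S.CanP q σ') := by
    intro i j hij hfij
    have hset : {q | S.CanP q (σ.drop (i : ℕ))} = {q | S.CanP q (σ.drop (j : ℕ))} :=
      congrArg Subtype.val hfij
    refine ⟨σ.take (i : ℕ) ++ σ.drop (j : ℕ), ?_, ?_⟩
    · have hi : (i : ℕ) < σ.length + 1 := i.isLt
      have hj : (j : ℕ) < σ.length + 1 := j.isLt
      rw [List.length_append, List.length_take, List.length_drop]
      omega
    · intro q
      constructor
      · intro hq
        rw [← List.take_append_drop (i : ℕ) σ] at hq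
        obtain ⟨p, h1, h2⟩ := canP_append.mp hq
        have hmem : p ∈ {q | S.CanP q (σ.drop (i : ℕ))} := h2
        rw [hset] at hmem
        exact canP_append.mpr ⟨p, h1, hmem⟩
      · intro hq
        obtain ⟨p, h1, h2⟩ := canP_append.mp hq
        have hmem : p ∈ {q | S.CanP q (σ.drop (j : ℕ))} := h2
        rw [← hset] at hmem
        rw [← List.take_append_drop (i : ℕ) σ]
        exact canP_append.mpr ⟨p, h1, hmem⟩
  rcases hij.lt_or_gt with h | h
  · exact key i j (Fin.lt_iff_val_lt_val.mp h) hfij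
  · exact key j i (Fin.lt_iff_val_lt_val.mp h) hfij.symm

/-- No-violation property for a fixed observed continuation `σ`. -/
def Pgood (S : LFSA Q E A) (QS : Set Q) (σ : List A) : Prop :=
  ∀ q0 ∈ S.Q0, ∀ (s1 : List E) (q1 : Q), S.Run q0 s1 q1 → q1 ∈ QS → S.CanP q1 σ →
    ∃ q0' ∈ S.Q0, ∃ (s1' : List E) (q1' : Q), S.Run q0' s1' q1' ∧ q1' ∉ QS ∧
      S.out s1 = S.out s1' ∧ S.CanP q1' σ

lemma kso_iff_pgood {S : LFSA Q E A} {QS : Set Q} {K : ℕ} :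
    S.KSO QS K ↔ ∀ σ : List A, σ.length ≤ K → S.Pgood QS σ := by
  constructor
  · rintro h σ hσ q0 hq0 s1 q1 hr1 hq1 ⟨s2, q2, hout, hr2⟩
    obtain ⟨q0', hq0', s1', q1', s2', q2', hr1', hr2', hns, ho1, ho2⟩ :=
      h q0 hq0 s1 q1 s2 q2 hr1 hr2 hq1 (by rw [hout]; exact hσ)
    exact ⟨q0', hq0', s1', q1', hr1', hns, ho1, s2', q2', by rw [← ho2, hout], hr2'⟩
  · intro h q0 hq0 s1 q1 s2 q2 hr1 hr2 hq1 hlen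
    obtain ⟨q0', hq0', s1', q1', hr1', hns, ho1, s2', q2', ho2, hr2'⟩ :=
      h (S.out s2) hlen q0 hq0 s1 q1 hr1 hq1 ⟨s2, q2, rfl, hr2⟩
    exact ⟨q0', hq0', s1', q1', s2', q2', hr1', hr2', hns, ho1, ho2.symm⟩

lemma pgood_of_bounded {S : LFSA Q E A} [Fintype Q] {QS : Set Q}
    (h : ∀ τ : List A, τ.length ≤ 2 ^ Fintype.card Q - 2 → S.Pgood QS τ) :
    ∀ σ : List A, S.Pgood QS σ := by
  suffices H : ∀ n : ℕ, ∀ σ : List A, σ.length = n → S.Pgood QS σ from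
    fun σ => H σ.length σ rfl
  intro n
  induction n using Nat.strong_induction_on with
  | _ n ih =>
    intro σ hσ
    by_cases hle : σ.length ≤ 2 ^ Fintype.card Q - 2
    · exact h σ hle
    · intro q0 hq0 s1 q1 hr1 hq1 hcan
      obtain ⟨σ', hlt, hiff⟩ := canP_shorten hcan (not_le.mp hle)
      obtain ⟨q0', hq0', s1', q1', hr', hns, houts, hcan'⟩ :=
        ih σ'.length (by omega) σ' rfl q0 hq0 s1 q1 hr1 hq1 ((hiff q1).mp hcan)
      exact ⟨q0', hq0', s1', q1', hr', hns, houts, (hiff q1').mpr hcan'⟩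

lemma kso_mono {S : LFSA Q E A} {QS : Set Q} {K K' : ℕ} (hK : K' ≤ K)
    (h : S.KSO QS K) : S.KSO QS K' :=
  fun q0 h0 s1 q1 s2 q2 h1 h2 hs hl => h q0 h0 s1 q1 s2 q2 h1 h2 hs (hl.trans hK)

end Aux

end LFSA

/-- `K`-step opacity is equivalent to `min{K, 2^{|Q|}-2}`-step opacity. -/
theorem stmt11 {Q E A : Type*} [Fintype Q] (S : LFSA Q E A) (QS : Set Q)
    (K : ℕ) (hK : 0 < K) :
    (S.KSO QS K ↔ S.KSO QS (min K (2 ^ Fintype.card Q - 2))) ∧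
    (2 ^ Fintype.card Q - 2 < K →
      (S.KSO QS K ↔ S.KSO QS (2 ^ Fintype.card Q - 2))) := by
  have main : ∀ K' : ℕ, 2 ^ Fintype.card Q - 2 < K' →
      (S.KSO QS K' ↔ S.KSO QS (2 ^ Fintype.card Q - 2)) := by
    intro K' h
    constructor
    · exact LFSA.kso_mono h.le
    · intro hkso
      rw [LFSA.kso_iff_pgood] at hkso ⊢
      intro σ _
      exact LFSA.pgood_of_bounded (fun τ hτ => hkso τ hτ) σ
  refine ⟨?_, fun h => main K h⟩
  rcases le_or_gt K (2 ^ Fintype.card Q - 2) with h | h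
  · rw [min_eq_left h]
  · rw [min_eq_right h.le]
    exact main K h
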